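/- arXiv:2410.10011 — 2 statements merged into one kernel-verified Lean document; each statement's English description precedes it below -/
import Mathlib

section
/- Indistinguishability lemma (backward direction of Proposition 1): let U = {1,...,n} and S = {S_1,...,S_m} ⊆ 2^U. Let ψ be a prenex quantified formula over the unary predicate 'in' whose quantifiers range over the singleton types Set_{i_1},...,Set_{i_q} (so the variables can only be bound to the objects S_{i_1},...,S_{i_q}), and let w ∈ U be such that w ∉ S_{i_l} for every l ∈ {1,...,q}. Then ⟨t_w, I_w⟩ ⊨ ψ implies ⟨t_d, I_d⟩ ⊨ ψ, where t_w = ⟨{in(S_i) | w ∈ S_i}⟩ and t_d = ⟨{in(d)}⟩. -/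
/-! Quantifier-free temporal formulas over predicates `P` and variables `X`,
evaluated on finite traces of states (sets of fluents over objects `O`). -/

/-- A fluent is a predicate applied to a list of objects. -/
abbrev Fluent (P O : Type) := P × List O

/-- A state is a set of fluents. -/
abbrev PState (P O : Type) := Set (Fluent P O)

/-- Quantifier-free temporal formulas:
`⊤`, atoms `p(x₁,…)`, `¬`, `∧`, `∨`, `⇒`, next `○`, previous `●`,
once (past eventually) `⧫`, and until `U`. -/
inductive TLForm (P X : Type) : Type where
  | top : TLForm P X
  | atom (p : P) (args : List X) : TLForm P X
  | neg (φ : TLForm P X) : TLForm P X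
  | conj (φ ψ : TLForm P X) : TLForm P X
  | disj (φ ψ : TLForm P X) : TLForm P X
  | impl (φ ψ : TLForm P X) : TLForm P X
  | next (φ : TLForm P X) : TLForm P X
  | prev (φ : TLForm P X) : TLForm P X
  | once (φ : TLForm P X) : TLForm P X
  | untl (φ ψ : TLForm P X) : TLForm P X

variable {P X O : Type}

/-- Satisfaction `t, e, i ⊨ φ` of a quantifier-free temporal formula at
position `i` of the trace `⟨t 0, …, t n⟩` (positions range over `0,…,n`),
under environment `e : X → O`. -/
def TLSat (t : ℕ → PState P O) (n : ℕ) (e : X → O) : TLForm P X → ℕ → Prop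
  | TLForm.top, _ => True
  | TLForm.atom p xs, i => (p, xs.map e) ∈ t i
  | TLForm.neg φ, i => ¬ TLSat t n e φ i
  | TLForm.conj φ ψ, i => TLSat t n e φ i ∧ TLSat t n e ψ i
  | TLForm.disj φ ψ, i => TLSat t n e φ i ∨ TLSat t n e ψ i
  | TLForm.impl φ ψ, i => TLSat t n e φ i → TLSat t n e ψ i
  | TLForm.next φ, i => i < n ∧ TLSat t n e φ (i + 1)
  | TLForm.prev φ, i => 0 < i ∧ TLSat t n e φ (i - 1)
  | TLForm.once φ, i => ∃ j, j ≤ i ∧ TLSat t n e φ j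
  | TLForm.untl φ ψ, i =>
      ∃ j, i ≤ j ∧ j ≤ n ∧ TLSat t n e ψ j ∧ ∀ k, i ≤ k → k < j → TLSat t n e φ k

/-- Derived modality `◇φ := ⊤ U φ`. -/
def TLForm.eventually (φ : TLForm P X) : TLForm P X := TLForm.untl TLForm.top φ

/-- Derived modality `□φ := ¬◇¬φ = ¬(⊤ U ¬φ)`. -/
def TLForm.always (φ : TLForm P X) : TLForm P X :=
  TLForm.neg (TLForm.untl TLForm.top (TLForm.neg φ))

/-- Derived past modality `■φ := ¬⧫¬φ`. -/
def TLForm.pastAlways (φ : TLForm P X) : TLForm P X :=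
  TLForm.neg (TLForm.once (TLForm.neg φ))

/-! First-order temporal formulas in prenex form: quantifiers `∃x∈τ` and
`∀x∈τ` over typed objects, with a quantifier-free temporal matrix. -/

/-- Prenex quantified first-order temporal formulas over predicates `P`,
variables `X` and type symbols `T`. -/
inductive FTLForm (P X T : Type) : Type where
  | ex (x : X) (ty : T) (ψ : FTLForm P X T) : FTLForm P X T
  | all (x : X) (ty : T) (ψ : FTLForm P X T) : FTLForm P X T
  | qf (φ : TLForm P X) : FTLForm P X T

variable {T : Type} [DecidableEq X]

/-- Satisfaction `⟨t, I⟩, e ⊨ ψ` of a prenex formula on an instantiated trace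
`⟨t 0, …, t n⟩` whose objects are typed by `τfn : O → T`, under environment
`e`. Quantified formulas update the environment; a quantifier-free formula is
evaluated at position `0` of the trace. -/
def FSat (τfn : O → T) (t : ℕ → PState P O) (n : ℕ) :
    FTLForm P X T → (X → O) → Prop
  | FTLForm.ex x ty ψ, e => ∃ o : O, τfn o = ty ∧ FSat τfn t n ψ (Function.update e x o)
  | FTLForm.all x ty ψ, e => ∀ o : O, τfn o = ty → FSat τfn t n ψ (Function.update e x o)
  | FTLForm.qf φ, e => TLSat t n e φ 0

/-! The Set Cover reduction of Proposition 1. A Set Cover instance is given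
by `U = Fin n` and a family `S : Fin m → Set (Fin n)`. The reduction uses a
single unary predicate `in` (the unique element of `Unit`), natural numbers
as variables, objects `S_1,…,S_m` plus a mock object `d`, a singleton type
`Set_i` for each `S_i`, and the root type for `d`. -/

/-- Objects of the reduction: `Sum.inl i` is the set `S_i`, `Sum.inr ()` is
the mock object `d`. -/
abbrev SCObj (m : ℕ) := Fin m ⊕ Unit

/-- Type symbols of the reduction: `some i` is the singleton type `Set_i`;
`none` is the type of the mock object `d`. -/
abbrev SCType (m : ℕ) := Option (Fin m)

/-- The typing function of the reduction: `τ(S_i) = Set_i`, and `d` gets the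
remaining type. -/
def scTau (m : ℕ) : SCObj m → SCType m
  | Sum.inl i => some i
  | Sum.inr _ => none

/-- The single state `I_j = {in(S_i) | j ∈ S_i}` of the trace `t_j`
associated to the element `j ∈ U`. -/
def scStateJ {n m : ℕ} (S : Fin m → Set (Fin n)) (j : Fin n) :
    PState Unit (SCObj m) :=
  {f | ∃ i : Fin m, j ∈ S i ∧ f = ((), [Sum.inl i])}

/-- The single state `I_d = {in(d)}` of the mock trace `t_d`. -/
def scStateD (m : ℕ) : PState Unit (SCObj m) :=
  {((), [Sum.inr ()])}

/-- The set of variables occurring in the atoms of a quantifier-free formula. -/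
def TLForm.vars : TLForm P X → Set X
  | TLForm.top => ∅
  | TLForm.atom _ xs => {x | x ∈ xs}
  | TLForm.neg φ => φ.vars
  | TLForm.conj φ ψ => φ.vars ∪ ψ.vars
  | TLForm.disj φ ψ => φ.vars ∪ ψ.vars
  | TLForm.impl φ ψ => φ.vars ∪ ψ.vars
  | TLForm.next φ => φ.vars
  | TLForm.prev φ => φ.vars
  | TLForm.once φ => φ.vars
  | TLForm.untl φ ψ => φ.vars ∪ ψ.vars

/-- The set of types quantified upon in a prenex formula. -/
def quantTypes : FTLForm P X T → Set T
  | FTLForm.ex _ ty ψ => insert ty (quantTypes ψ)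
  | FTLForm.all _ ty ψ => insert ty (quantTypes ψ)
  | FTLForm.qf _ => ∅

/-- `ClosedUnder ψ B`: every variable of an atom in the matrix of the prenex
formula `ψ` is either in `B` or bound by one of the quantifiers of `ψ`.
`ClosedUnder ψ ∅` means that `ψ` is a sentence. -/
def ClosedUnder : FTLForm P X T → Set X → Prop
  | FTLForm.ex x _ ψ, B => ClosedUnder ψ (insert x B)
  | FTLForm.all x _ ψ, B => ClosedUnder ψ (insert x B)
  | FTLForm.qf φ, B => φ.vars ⊆ B

lemma tl_congr {P X O : Type} (t1 t2 : ℕ → PState P O) (nn : ℕ) (e : X → O) (B : Set X)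
    (h : ∀ (p : P) (xs : List X), (∀ x ∈ xs, x ∈ B) →
      ∀ i, ((p, xs.map e) ∈ t1 i ↔ (p, xs.map e) ∈ t2 i)) :
    ∀ φ : TLForm P X, φ.vars ⊆ B → ∀ i, (TLSat t1 nn e φ i ↔ TLSat t2 nn e φ i) := by
  intro φ
  induction φ with
  | top => simp [TLSat]
  | atom p xs =>
    intro hv i
    exact h p xs (fun x hx => hv hx) i
  | neg φ ih =>
    intro hv i
    simp only [TLSat]
    exact not_congr (ih hv i)
  | conj φ ψ ih1 ih2 =>
    intro hv i
    have hv1 : φ.vars ⊆ B := fun x hx => hv (Or.inl hx)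
    have hv2 : ψ.vars ⊆ B := fun x hx => hv (Or.inr hx)
    exact and_congr (ih1 hv1 i) (ih2 hv2 i)
  | disj φ ψ ih1 ih2 =>
    intro hv i
    have hv1 : φ.vars ⊆ B := fun x hx => hv (Or.inl hx)
    have hv2 : ψ.vars ⊆ B := fun x hx => hv (Or.inr hx)
    exact or_congr (ih1 hv1 i) (ih2 hv2 i)
  | impl φ ψ ih1 ih2 =>
    intro hv i
    have hv1 : φ.vars ⊆ B := fun x hx => hv (Or.inl hx)
    have hv2 : ψ.vars ⊆ B := fun x hx => hv (Or.inr hx)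
    exact imp_congr (ih1 hv1 i) (ih2 hv2 i)
  | next φ ih =>
    intro hv i
    exact and_congr Iff.rfl (ih hv (i + 1))
  | prev φ ih =>
    intro hv i
    exact and_congr Iff.rfl (ih hv (i - 1))
  | once φ ih =>
    intro hv i
    exact exists_congr fun j => and_congr Iff.rfl (ih hv j)
  | untl φ ψ ih1 ih2 =>
    intro hv i
    have hv1 : φ.vars ⊆ B := fun x hx => hv (Or.inl hx)
    have hv2 : ψ.vars ⊆ B := fun x hx => hv (Or.inr hx)
    exact exists_congr fun j => and_congr Iff.rfl (and_congr Iff.rfl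
      (and_congr (ih2 hv2 j)
        (forall_congr' fun k => imp_congr Iff.rfl (imp_congr Iff.rfl (ih1 hv1 k)))))

lemma fsat_congr {n m : ℕ} (S : Fin m → Set (Fin n)) (w : Fin n) :
    ∀ (ψ : FTLForm Unit ℕ (SCType m)) (B : Set ℕ) (e : ℕ → SCObj m),
    ClosedUnder ψ B →
    (∀ ty ∈ quantTypes ψ, ∃ i : Fin m, ty = some i ∧ w ∉ S i) →
    (∀ x ∈ B, ∃ i : Fin m, e x = Sum.inl i ∧ w ∉ S i) →
    (FSat (scTau m) (fun _ => scStateJ S w) 0 ψ e ↔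
      FSat (scTau m) (fun _ => scStateD m) 0 ψ e) := by
  intro ψ
  induction ψ with
  | ex x ty ψ ih =>
    intro B e hc hq he
    obtain ⟨i, hty, hwi⟩ := hq ty (Or.inl rfl)
    subst hty
    simp only [FSat]
    constructor <;> rintro ⟨o, ho, h'⟩ <;> refine ⟨o, ho, ?_⟩ <;>
    · have ho' := ho
      cases o with
      | inr u => simp [scTau] at ho'
      | inl j =>
        simp only [scTau, Option.some.injEq] at ho'
        have hwj : w ∉ S j := by rw [ho']; exact hwi
        have he' : ∀ y ∈ insert x B, ∃ i' : Fin m,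
            Function.update e x (Sum.inl j) y = Sum.inl i' ∧ w ∉ S i' := by
          intro y hy
          rcases hy with hy | hy
          · subst hy; exact ⟨j, by simp, hwj⟩
          · by_cases hxy : y = x
            · subst hxy; exact ⟨j, by simp, hwj⟩
            · obtain ⟨i', h1, h2⟩ := he y hy
              exact ⟨i', by simpa [Function.update, hxy] using h1, h2⟩
        have := ih (insert x B) (Function.update e x (Sum.inl j)) hc
          (fun ty' hty' => hq ty' (Or.inr hty')) he'
        first
        | exact this.mp h'
        | exact this.mpr h'
  | all x ty ψ ih =>
    intro B e hc hq he
    obtain ⟨i, hty, hwi⟩ := hq ty (Or.inl rfl)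
    subst hty
    simp only [FSat]
    constructor <;> intro h' o ho <;>
    · have ho' := ho
      cases o with
      | inr u => simp [scTau] at ho'
      | inl j =>
        simp only [scTau, Option.some.injEq] at ho'
        have hwj : w ∉ S j := by rw [ho']; exact hwi
        have he' : ∀ y ∈ insert x B, ∃ i' : Fin m,
            Function.update e x (Sum.inl j) y = Sum.inl i' ∧ w ∉ S i' := by
          intro y hy
          rcases hy with hy | hy
          · subst hy; exact ⟨j, by simp, hwj⟩
          · by_cases hxy : y = x
            · subst hxy; exact ⟨j, by simp, hwj⟩
            · obtain ⟨i', h1, h2⟩ := he y hy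
              exact ⟨i', by simpa [Function.update, hxy] using h1, h2⟩
        have := ih (insert x B) (Function.update e x (Sum.inl j)) hc
          (fun ty' hty' => hq ty' (Or.inr hty')) he'
        first
        | exact this.mp (h' (Sum.inl j) ho)
        | exact this.mpr (h' (Sum.inl j) ho)
  | qf φ =>
    intro B e hc _ he
    simp only [FSat]
    apply tl_congr _ _ _ _ B _ φ hc 0
    intro p xs hxs i
    constructor
    · rintro hmem
      exfalso
      obtain ⟨j, hwj, hj⟩ := hmem
      simp only [Prod.mk.injEq] at hj
      obtain ⟨-, hmap⟩ := hj
      cases xs with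
      | nil => simp at hmap
      | cons x rest =>
        cases rest with
        | cons y r => simp at hmap
        | nil =>
          simp only [List.map_cons, List.map_nil, List.cons.injEq] at hmap
          obtain ⟨i', h1, h2⟩ := he x (hxs x (by simp))
          rw [h1] at hmap
          obtain ⟨hji, -⟩ := hmap
          injection hji with hji
          exact h2 (hji ▸ hwj)
    · intro hmem
      exfalso
      simp only [scStateD, Set.mem_singleton_iff, Prod.mk.injEq] at hmem
      obtain ⟨-, hmap⟩ := hmem
      cases xs with
      | nil => simp at hmap
      | cons x rest =>
        cases rest with
        | cons y r => simp at hmap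
        | nil =>
          simp only [List.map_cons, List.map_nil, List.cons.injEq] at hmap
          obtain ⟨i', h1, -⟩ := he x (hxs x (by simp))
          rw [h1] at hmap
          exact Sum.inl_ne_inr hmap.1

/-- indistinguishability lemma (backward direction of
Proposition 1). Let `ψ` be a closed prenex formula over the unary predicate
`in` whose quantifiers all range over singleton types `Set_{i_l}` with
`w ∉ S_{i_l}`. Then if the single-state trace `t_w = ⟨{in(S_i) | w ∈ S_i}⟩`
satisfies `ψ`, so does the mock trace `t_d = ⟨{in(d)}⟩`. -/
theorem set_cover_indistinguishability (n m : ℕ) (S : Fin m → Set (Fin n))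
    (w : Fin n) (ψ : FTLForm Unit ℕ (SCType m))
    (hclosed : ClosedUnder ψ (∅ : Set ℕ))
    (hquant : ∀ ty ∈ quantTypes ψ, ∃ i : Fin m, ty = some i ∧ w ∉ S i)
    (e : ℕ → SCObj m) :
    FSat (scTau m) (fun _ => scStateJ S w) 0 ψ e →
    FSat (scTau m) (fun _ => scStateD m) 0 ψ e := by
  exact (fsat_congr S w ψ ∅ e hclosed hquant (fun x hx => absurd hx (Set.notMem_empty x))).mp
end

section
/- Correctness of the Set Cover reduction (mathematical content of Proposition 1): let U = {1,...,n}, S = {S_1,...,S_m} ⊆ 2^U, and k ∈ ℕ. There exists a subset T ⊆ S with |T| ≤ k and ∪_{s∈T} s = U if and only if there exists a prenex quantified formula ψ over the unary predicate 'in', with at most k quantifiers ranging over the singleton types Set_1,...,Set_m and at most m−1 logical operators in its quantifier-free part, such that ⟨t_j, I_j⟩ ⊨ ψ for every j ∈ U and ⟨t_d, I_d⟩ ⊭ ψ. -/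
variable {P X O : Type}

variable {T : Type} [DecidableEq X]

/-- The number of logical operators (connective nodes of the syntax tree) of
a quantifier-free temporal formula. -/
def TLForm.numOps : TLForm P X → ℕ
  | TLForm.top => 0
  | TLForm.atom _ _ => 0
  | TLForm.neg φ => φ.numOps + 1
  | TLForm.conj φ ψ => φ.numOps + ψ.numOps + 1
  | TLForm.disj φ ψ => φ.numOps + ψ.numOps + 1
  | TLForm.impl φ ψ => φ.numOps + ψ.numOps + 1
  | TLForm.next φ => φ.numOps + 1
  | TLForm.prev φ => φ.numOps + 1
  | TLForm.once φ => φ.numOps + 1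
  | TLForm.untl φ ψ => φ.numOps + ψ.numOps + 1

/-- The number of quantifiers of a prenex formula. -/
def numQuant : FTLForm P X T → ℕ
  | FTLForm.ex _ _ ψ => numQuant ψ + 1
  | FTLForm.all _ _ ψ => numQuant ψ + 1
  | FTLForm.qf _ => 0

/-- The quantifier-free matrix of a prenex formula. -/
def qfPart : FTLForm P X T → TLForm P X
  | FTLForm.ex _ _ ψ => qfPart ψ
  | FTLForm.all _ _ ψ => qfPart ψ
  | FTLForm.qf φ => φ


/-! ### Auxiliary definitions and lemmas for the reduction proof -/

section SCAux

/-- Big disjunction `in(x_{i₁}) ∨ … ∨ in(x_{i_r})` over a list of indices. -/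
def coverMatrix {m : ℕ} : List (Fin m) → TLForm Unit ℕ
  | [] => TLForm.atom () []
  | [i] => TLForm.atom () [(i : ℕ)]
  | i :: j :: l => TLForm.disj (TLForm.atom () [(i : ℕ)]) (coverMatrix (j :: l))

/-- Existential quantifier prefix `∃x_{i₁}∈Set_{i₁}. … ∃x_{i_r}∈Set_{i_r}. φ`. -/
def coverQuant {m : ℕ} : List (Fin m) → TLForm Unit ℕ → FTLForm Unit ℕ (SCType m)
  | [], φ => FTLForm.qf φ
  | i :: l, φ => FTLForm.ex (i : ℕ) (some i) (coverQuant l φ)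

/-- Environment obtained by binding `x_i := S_i` for each `i` in the list. -/
def updEnv {m : ℕ} : List (Fin m) → (ℕ → SCObj m) → (ℕ → SCObj m)
  | [], e => e
  | i :: l, e => updEnv l (Function.update e (i : ℕ) (Sum.inl i))

lemma coverMatrix_numOps {m : ℕ} : ∀ l : List (Fin m),
    (coverMatrix l).numOps ≤ l.length - 1
  | [] => by simp [coverMatrix, TLForm.numOps]
  | [i] => by simp [coverMatrix, TLForm.numOps]
  | i :: j :: l => by
      have h := coverMatrix_numOps (j :: l)
      simp only [coverMatrix, TLForm.numOps, List.length_cons] at *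
      omega

lemma coverMatrix_vars {m : ℕ} : ∀ l : List (Fin m),
    (coverMatrix l).vars ⊆ {x | ∃ i ∈ l, x = (i : ℕ)}
  | [] => by simp [coverMatrix, TLForm.vars]
  | [i] => by
      intro x hx
      simp [coverMatrix, TLForm.vars] at hx
      exact ⟨i, by simp, hx⟩
  | i :: j :: l => by
      intro x hx
      rcases hx with hx | hx
      · simp only [TLForm.vars, List.mem_singleton, Set.mem_setOf_eq] at hx
        exact ⟨i, by simp, hx⟩
      · rcases coverMatrix_vars (j :: l) hx with ⟨i', hi', hx⟩
        exact ⟨i', by simp at hi' ⊢; tauto, hx⟩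

lemma coverMatrix_sat {m : ℕ} (s : PState Unit (SCObj m)) (e : ℕ → SCObj m) :
    ∀ l : List (Fin m), l ≠ [] →
    (TLSat (fun _ => s) 0 e (coverMatrix l) 0 ↔ ∃ i ∈ l, ((), [e (i : ℕ)]) ∈ s)
  | [], h => absurd rfl h
  | [i], _ => by simp [coverMatrix, TLSat]
  | i :: j :: l, _ => by
      have h := coverMatrix_sat s e (j :: l) (by simp)
      simp only [coverMatrix, TLSat, h, List.map]
      constructor
      · rintro (h1 | ⟨i', hi', h2⟩)
        · exact ⟨i, by simp, h1⟩
        · exact ⟨i', by simp at hi' ⊢; tauto, h2⟩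
      · rintro ⟨i', hi', h2⟩
        rcases List.mem_cons.1 hi' with rfl | hi'
        · exact Or.inl h2
        · exact Or.inr ⟨i', hi', h2⟩

lemma coverQuant_numQuant {m : ℕ} (φ : TLForm Unit ℕ) : ∀ l : List (Fin m),
    numQuant (coverQuant l φ) = l.length
  | [] => rfl
  | i :: l => by simp [coverQuant, numQuant, coverQuant_numQuant φ l]

lemma coverQuant_qfPart {m : ℕ} (φ : TLForm Unit ℕ) : ∀ l : List (Fin m),
    qfPart (coverQuant l φ) = φ
  | [] => rfl
  | i :: l => by simp [coverQuant, qfPart, coverQuant_qfPart φ l]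

lemma coverQuant_quantTypes {m : ℕ} (φ : TLForm Unit ℕ) : ∀ l : List (Fin m),
    ∀ ty ∈ quantTypes (coverQuant l φ), ∃ i : Fin m, ty = some i
  | [] => by simp [coverQuant, quantTypes]
  | i :: l => by
      intro ty hty
      simp only [coverQuant, quantTypes, Set.mem_insert_iff] at hty
      rcases hty with rfl | hty
      · exact ⟨i, rfl⟩
      · exact coverQuant_quantTypes φ l ty hty

lemma coverQuant_closed {m : ℕ} (φ : TLForm Unit ℕ) : ∀ (l : List (Fin m)) (B : Set ℕ),
    φ.vars ⊆ {x | ∃ i ∈ l, x = (i : ℕ)} ∪ B → ClosedUnder (coverQuant l φ) B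
  | [], B => by
      intro h
      simp only [coverQuant, ClosedUnder]
      intro x hx
      rcases h hx with ⟨i, hi, _⟩ | hB
      · simp at hi
      · exact hB
  | i :: l, B => by
      intro h
      simp only [coverQuant, ClosedUnder]
      apply coverQuant_closed φ l
      intro x hx
      rcases h hx with ⟨i', hi', rfl⟩ | hB
      · rcases List.mem_cons.1 hi' with rfl | hi'
        · exact Or.inr (Set.mem_insert _ _)
        · exact Or.inl ⟨i', hi', rfl⟩
      · exact Or.inr (Set.mem_insert_of_mem _ hB)

lemma scTau_eq_some {m : ℕ} (i : Fin m) (Q : SCObj m → Prop) :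
    (∃ o, scTau m o = some i ∧ Q o) ↔ Q (Sum.inl i) := by
  constructor
  · rintro ⟨(i' | u), ho, h⟩
    · simp only [scTau, Option.some.injEq] at ho
      exact ho ▸ h
    · simp [scTau] at ho
  · intro h; exact ⟨Sum.inl i, rfl, h⟩

lemma coverQuant_fsat {m : ℕ} (φ : TLForm Unit ℕ) (t : ℕ → PState Unit (SCObj m)) :
    ∀ (l : List (Fin m)) (e : ℕ → SCObj m),
    FSat (scTau m) t 0 (coverQuant l φ) e ↔ TLSat t 0 (updEnv l e) φ 0
  | [], e => Iff.rfl
  | i :: l, e => by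
      simp only [coverQuant, FSat, updEnv]
      rw [scTau_eq_some i (fun o => FSat (scTau m) t 0 (coverQuant l φ) (Function.update e (i:ℕ) o))]
      exact coverQuant_fsat φ t l _

lemma updEnv_notmem {m : ℕ} : ∀ (l : List (Fin m)) (e : ℕ → SCObj m) (x : ℕ),
    (∀ i ∈ l, (i : ℕ) ≠ x) → updEnv l e x = e x
  | [], e, x => fun _ => rfl
  | i :: l, e, x => by
      intro h
      rw [updEnv, updEnv_notmem l _ x (fun i' hi' => h i' (List.mem_cons_of_mem _ hi')),
        Function.update_of_ne (Ne.symm (h i List.mem_cons_self))]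

lemma updEnv_mem {m : ℕ} : ∀ (l : List (Fin m)), l.Nodup → ∀ (e : ℕ → SCObj m) (i : Fin m),
    i ∈ l → updEnv l e (i : ℕ) = Sum.inl i
  | [], _, e, i => by simp
  | i' :: l, hnd, e, i => by
      intro hi
      rcases List.mem_cons.1 hi with rfl | hi
      · rw [updEnv, updEnv_notmem]
        · simp
        · intro i'' hi'' hval
          have : i'' = i := Fin.val_injective hval
          exact (List.nodup_cons.1 hnd).1 (this ▸ hi'')
      · exact updEnv_mem l (List.nodup_cons.1 hnd).2 _ i hi

/-! Backward-direction lemmas: on uncovered elements, `t_j` and `t_d` agree. -/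

lemma atom_false_both {n m : ℕ} (S : Fin m → Set (Fin n)) (j : Fin n)
    (e : ℕ → SCObj m) (xs : List ℕ)
    (h : ∀ x ∈ xs, ∃ i : Fin m, e x = Sum.inl i ∧ j ∉ S i) (p : Unit) :
    (p, xs.map e) ∉ scStateJ S j ∧ (p, xs.map e) ∉ scStateD m := by
  constructor
  · rintro ⟨i, hji, heq⟩
    have hxs : xs.map e = [Sum.inl i] := congrArg Prod.snd heq
    rcases xs with _ | ⟨x, _ | ⟨y, xs⟩⟩
    · simp at hxs
    · simp only [List.map_cons, List.map_nil, List.cons.injEq] at hxs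
      rcases h x (by simp) with ⟨i', he', hji'⟩
      rw [he'] at hxs
      cases Sum.inl.inj hxs.1
      exact hji' hji
    · simp at hxs
  · intro hd
    have hxs : xs.map e = [Sum.inr ()] := congrArg Prod.snd hd
    rcases xs with _ | ⟨x, _ | ⟨y, xs⟩⟩
    · simp at hxs
    · simp only [List.map_cons, List.map_nil, List.cons.injEq] at hxs
      rcases h x (by simp) with ⟨i', he', _⟩
      rw [he'] at hxs
      exact nomatch hxs.1
    · simp at hxs

lemma tl_equiv {n m : ℕ} (S : Fin m → Set (Fin n)) (j : Fin n) :
    ∀ (φ : TLForm Unit ℕ) (e : ℕ → SCObj m),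
    (∀ x ∈ φ.vars, ∃ i : Fin m, e x = Sum.inl i ∧ j ∉ S i) →
    ∀ p : ℕ, (TLSat (fun _ => scStateJ S j) 0 e φ p ↔
              TLSat (fun _ => scStateD m) 0 e φ p)
  | TLForm.top, e, h, p => Iff.rfl
  | TLForm.atom pr xs, e, h, p => by
      have := atom_false_both S j e xs h pr
      simp only [TLSat]
      exact iff_of_false this.1 this.2
  | TLForm.neg φ, e, h, p => by
      simp only [TLSat]; rw [tl_equiv S j φ e h p]
  | TLForm.conj φ ψ, e, h, p => by
      simp only [TLSat]
      rw [tl_equiv S j φ e (fun x hx => h x (Or.inl hx)) p,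
          tl_equiv S j ψ e (fun x hx => h x (Or.inr hx)) p]
  | TLForm.disj φ ψ, e, h, p => by
      simp only [TLSat]
      rw [tl_equiv S j φ e (fun x hx => h x (Or.inl hx)) p,
          tl_equiv S j ψ e (fun x hx => h x (Or.inr hx)) p]
  | TLForm.impl φ ψ, e, h, p => by
      simp only [TLSat]
      rw [tl_equiv S j φ e (fun x hx => h x (Or.inl hx)) p,
          tl_equiv S j ψ e (fun x hx => h x (Or.inr hx)) p]
  | TLForm.next φ, e, h, p => by
      simp only [TLSat]; rw [tl_equiv S j φ e h (p + 1)]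
  | TLForm.prev φ, e, h, p => by
      simp only [TLSat]; rw [tl_equiv S j φ e h (p - 1)]
  | TLForm.once φ, e, h, p => by
      simp only [TLSat]
      exact exists_congr fun q => and_congr_right fun _ => tl_equiv S j φ e h q
  | TLForm.untl φ ψ, e, h, p => by
      simp only [TLSat]
      refine exists_congr fun q => and_congr_right fun _ => and_congr_right fun _ => ?_
      rw [tl_equiv S j ψ e (fun x hx => h x (Or.inr hx)) q]
      refine and_congr_right fun _ => forall_congr' fun r => ?_
      rw [imp_congr_right fun _ => imp_congr_right fun _ =>
          tl_equiv S j φ e (fun x hx => h x (Or.inl hx)) r]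

lemma fsat_equiv {n m : ℕ} (S : Fin m → Set (Fin n)) (j : Fin n) :
    ∀ (ψ : FTLForm Unit ℕ (SCType m)) (B : Set ℕ) (e : ℕ → SCObj m),
    ClosedUnder ψ B →
    (∀ ty ∈ quantTypes ψ, ∃ i : Fin m, ty = some i ∧ j ∉ S i) →
    (∀ x ∈ B, ∃ i : Fin m, e x = Sum.inl i ∧ j ∉ S i) →
    (FSat (scTau m) (fun _ => scStateJ S j) 0 ψ e ↔
     FSat (scTau m) (fun _ => scStateD m) 0 ψ e)
  | FTLForm.ex x ty ψ, B, e => by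
      intro hcl hty he
      rcases hty ty (Set.mem_insert _ _) with ⟨i, rfl, hji⟩
      simp only [FSat]
      refine exists_congr fun o => and_congr_right fun ho => ?_
      have ho' : o = Sum.inl i := by
        rcases o with i' | u
        · simp only [scTau, Option.some.injEq] at ho; exact congrArg _ ho
        · simp [scTau] at ho
      subst ho'
      refine fsat_equiv S j ψ (insert x B) _ hcl
        (fun ty' hty' => hty ty' (Set.mem_insert_of_mem _ hty')) ?_
      intro y hy
      rcases hy with rfl | hy
      · exact ⟨i, Function.update_self _ _ _, hji⟩
      · rcases he y hy with ⟨i', he', hji'⟩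
        rcases eq_or_ne y x with rfl | hne
        · exact ⟨i, Function.update_self _ _ _, hji⟩
        · exact ⟨i', (Function.update_of_ne hne _ _).trans he', hji'⟩
  | FTLForm.all x ty ψ, B, e => by
      intro hcl hty he
      rcases hty ty (Set.mem_insert _ _) with ⟨i, rfl, hji⟩
      simp only [FSat]
      refine forall_congr' fun o => imp_congr_right fun ho => ?_
      have ho' : o = Sum.inl i := by
        rcases o with i' | u
        · simp only [scTau, Option.some.injEq] at ho; exact congrArg _ ho
        · simp [scTau] at ho
      subst ho'
      refine fsat_equiv S j ψ (insert x B) _ hcl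
        (fun ty' hty' => hty ty' (Set.mem_insert_of_mem _ hty')) ?_
      intro y hy
      rcases hy with rfl | hy
      · exact ⟨i, Function.update_self _ _ _, hji⟩
      · rcases he y hy with ⟨i', he', hji'⟩
        rcases eq_or_ne y x with rfl | hne
        · exact ⟨i, Function.update_self _ _ _, hji⟩
        · exact ⟨i', (Function.update_of_ne hne _ _).trans he', hji'⟩
  | FTLForm.qf φ, B, e => by
      intro hcl _ he
      exact tl_equiv S j φ e (fun x hx => he x (hcl hx)) 0

lemma quantTypes_list {m : ℕ} : ∀ ψ : FTLForm Unit ℕ (SCType m),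
    ∃ l : List (Fin m), l.length ≤ numQuant ψ ∧
      ∀ i : Fin m, (some i : SCType m) ∈ quantTypes ψ → i ∈ l
  | FTLForm.ex x ty ψ => by
      rcases quantTypes_list ψ with ⟨l, hlen, hmem⟩
      rcases ty with _ | i
      · exact ⟨l, by simp only [numQuant]; omega, fun i' hi' => by
          rcases hi' with h | h
          · exact absurd h (by simp)
          · exact hmem i' h⟩
      · exact ⟨i :: l, by simp only [numQuant, List.length_cons]; omega, fun i' hi' => by
          rcases hi' with h | h
          · simp only [Option.some.injEq] at h; exact h ▸ List.mem_cons_self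
          · exact List.mem_cons_of_mem _ (hmem i' h)⟩
  | FTLForm.all x ty ψ => by
      rcases quantTypes_list ψ with ⟨l, hlen, hmem⟩
      rcases ty with _ | i
      · exact ⟨l, by simp only [numQuant]; omega, fun i' hi' => by
          rcases hi' with h | h
          · exact absurd h (by simp)
          · exact hmem i' h⟩
      · exact ⟨i :: l, by simp only [numQuant, List.length_cons]; omega, fun i' hi' => by
          rcases hi' with h | h
          · simp only [Option.some.injEq] at h; exact h ▸ List.mem_cons_self
          · exact List.mem_cons_of_mem _ (hmem i' h)⟩
  | FTLForm.qf φ => ⟨[], le_refl _, fun i hi => absurd hi (by simp [quantTypes])⟩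

end SCAux

/-- correctness of the Set Cover reduction (Proposition 1).
There is a subfamily `T ⊆ S` of at most `k` sets covering `U = Fin n` iff
there is a closed prenex formula `ψ` over the unary predicate `in`, with at
most `k` quantifiers all ranging over the singleton types `Set_1,…,Set_m`
and at most `m - 1` logical operators in its quantifier-free part, that is
satisfied by `⟨t_j, I_j⟩` for every `j ∈ U` and falsified by `⟨t_d, I_d⟩`. -/
theorem set_cover_reduction_correct (n m : ℕ) (S : Fin m → Set (Fin n))
    (k : ℕ) (e : ℕ → SCObj m) :
    (∃ I : Finset (Fin m), I.card ≤ k ∧ ∀ j : Fin n, ∃ i ∈ I, j ∈ S i) ↔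
    (∃ ψ : FTLForm Unit ℕ (SCType m),
      ClosedUnder ψ (∅ : Set ℕ) ∧
      numQuant ψ ≤ k ∧
      (qfPart ψ).numOps ≤ m - 1 ∧
      (∀ ty ∈ quantTypes ψ, ∃ i : Fin m, ty = some i) ∧
      (∀ j : Fin n, FSat (scTau m) (fun _ => scStateJ S j) 0 ψ e) ∧
      ¬ FSat (scTau m) (fun _ => scStateD m) 0 ψ e) := by
  constructor
  · rintro ⟨I, hcard, hcover⟩
    rcases Nat.eq_zero_or_pos n with rfl | hn
    · -- empty universe: use the formula `in()`, false everywhere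
      refine ⟨FTLForm.qf (TLForm.atom () []), ?_, ?_, ?_, ?_, ?_, ?_⟩
      · intro x hx; simp [TLForm.vars] at hx
      · simp [numQuant]
      · simp [qfPart, TLForm.numOps]
      · intro ty hty; exact absurd hty (by simp [quantTypes])
      · exact fun j => j.elim0
      · intro h
        simp only [FSat, TLSat, List.map_nil] at h
        simp [scStateD] at h
    · -- nonempty universe: the cover `I` is nonempty
      set l : List (Fin m) := I.toList with hl
      have hne : l ≠ [] := by
        rcases hcover ⟨0, hn⟩ with ⟨i, hi, _⟩
        intro h
        rw [hl] at h
        exact absurd (Finset.mem_toList.2 hi) (h ▸ (List.not_mem_nil : i ∉ []))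
      refine ⟨coverQuant l (coverMatrix l), ?_, ?_, ?_, ?_, ?_, ?_⟩
      · exact coverQuant_closed _ l ∅ (fun x hx => Or.inl (coverMatrix_vars l hx))
      · rw [coverQuant_numQuant, hl, Finset.length_toList]; exact hcard
      · rw [coverQuant_qfPart]
        calc (coverMatrix l).numOps ≤ l.length - 1 := coverMatrix_numOps l
          _ ≤ m - 1 := by
            have : l.length ≤ m := by
              rw [hl, Finset.length_toList]
              simpa using Finset.card_le_card (Finset.subset_univ I)
            omega
      · exact coverQuant_quantTypes _ l
      · intro j
        rw [coverQuant_fsat, coverMatrix_sat _ _ l hne]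
        rcases hcover j with ⟨i, hi, hji⟩
        refine ⟨i, Finset.mem_toList.2 hi, ?_⟩
        rw [updEnv_mem l (Finset.nodup_toList I) e i (Finset.mem_toList.2 hi)]
        exact ⟨i, hji, rfl⟩
      · intro h
        rw [coverQuant_fsat, coverMatrix_sat _ _ l hne] at h
        rcases h with ⟨i, hi, hmem⟩
        rw [updEnv_mem l (Finset.nodup_toList I) e i hi] at hmem
        simp [scStateD] at hmem
  · rintro ⟨ψ, hcl, hq, _, hty, hsat, hunsat⟩
    rcases quantTypes_list ψ with ⟨l, hlen, hmem⟩
    refine ⟨l.toFinset, le_trans (le_trans (List.toFinset_card_le l) hlen) hq, ?_⟩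
    intro j
    by_contra hcon
    push_neg at hcon
    apply hunsat
    rw [← fsat_equiv S j ψ ∅ e hcl ?_ (fun x hx => absurd hx (Set.notMem_empty x))]
    · exact hsat j
    · intro ty hty'
      rcases hty ty hty' with ⟨i, rfl⟩
      exact ⟨i, rfl, hcon i (List.mem_toFinset.2 (hmem i hty'))⟩
end
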